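/- For integers 2 ≤ n_s < ... < n_2 < n_1, the mixed hypergraph H*_{n_1,...,n_s} of Construction I, which has 2n_1 - n_s vertices, is a one-realization of S = {n_1, ..., n_s}: its strict colorings are exactly the s coordinate-projection colorings c_1^{s*}, ..., c_s^{s*}, where c_i^{s*} uses exactly n_i colors. -/

import Mathlib

/-- A mixed hypergraph on vertex type `V`: families of C-edges and D-edges. -/
structure MixedHypergraph (V : Type*) where
  Cedges : Set (Set V)
  Dedges : Set (Set V)

/-- A strict `k`-coloring: a surjective coloring with `k` colors such that every
C-edge has two distinct vertices with a common color and every D-edge has two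
distinct vertices with distinct colors. -/
def IsStrictColoring {V : Type*} (H : MixedHypergraph V) (k : ℕ) (f : V → Fin k) : Prop :=
  Function.Surjective f ∧
  (∀ e ∈ H.Cedges, ∃ u ∈ e, ∃ v ∈ e, u ≠ v ∧ f u = f v) ∧
  (∀ e ∈ H.Dedges, ∃ u ∈ e, ∃ v ∈ e, u ≠ v ∧ f u ≠ f v)

/-- The feasible set of a mixed hypergraph. -/
def FeasibleSet {V : Type*} (H : MixedHypergraph V) : Set ℕ :=
  {k | ∃ f : V → Fin k, IsStrictColoring H k f}

/-- Two colorings induce the same partition of the vertex set. -/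
def SamePartition {V : Type*} {k k' : ℕ} (f : V → Fin k) (g : V → Fin k') : Prop :=
  ∀ u v, f u = f v ↔ g u = g v

/-- `H` is a one-realization of `S`: its feasible set is `S` and for each `k`
the partition induced by a strict `k`-coloring is unique. -/
def IsOneRealization {V : Type*} (H : MixedHypergraph V) (S : Set ℕ) : Prop :=
  FeasibleSet H = S ∧
  ∀ (k : ℕ) (f g : V → Fin k), IsStrictColoring H k f → IsStrictColoring H k g →
    SamePartition f g

/-- Vertex set of Construction I: `X* ⊆ [n₁] × ⋯ × [n_s]` consists of the diagonal
vertices `(i,…,i)` for `i ∈ [n_s - 1]`; for each `2 ≤ t ≤ s` and `n_t ≤ j ≤ n_{t-1}-1`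
the vertices `(j,…,j,n_t,…,n_s)` and `(j,…,j,1,…,1)` (`j` repeated `t-1` times);
and `(n₁,…,n_s)`.  (Index `t` of the paper corresponds to `t.val + 1` here.) -/
def XstarGen (s : ℕ) (n : Fin s → ℕ) : Set (Fin s → ℕ) :=
  {x | (∃ last : Fin s, (last : ℕ) + 1 = s ∧ ∃ i, 1 ≤ i ∧ i + 1 ≤ n last ∧ ∀ k, x k = i) ∨
       (∃ t u : Fin s, (u : ℕ) + 1 = (t : ℕ) ∧ ∃ j, n t ≤ j ∧ j + 1 ≤ n u ∧
         ((∀ k : Fin s, ((k : ℕ) < (t : ℕ) → x k = j) ∧ ((t : ℕ) ≤ (k : ℕ) → x k = n k)) ∨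
          (∀ k : Fin s, ((k : ℕ) < (t : ℕ) → x k = j) ∧ ((t : ℕ) ≤ (k : ℕ) → x k = 1)))) ∨
       (∀ k, x k = n k)}

/-- The Construction-I mixed hypergraph on a vertex set `X` of `s`-tuples:
D-edges are pairs of vertices differing in every coordinate, and C-edges are
triples of distinct vertices such that every coordinate takes exactly two
distinct values among the three. -/
def HstarOn {s : ℕ} (X : Set (Fin s → ℕ)) : MixedHypergraph X where
  Cedges := {e | ∃ u v w : X, u ≠ v ∧ u ≠ w ∧ v ≠ w ∧ e = {u, v, w} ∧
    ∀ k : Fin s, ({(u : Fin s → ℕ) k, (v : Fin s → ℕ) k, (w : Fin s → ℕ) k} : Finset ℕ).card = 2}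
  Dedges := {e | ∃ u v : X, e = {u, v} ∧ ∀ k : Fin s, (u : Fin s → ℕ) k ≠ (v : Fin s → ℕ) k}

namespace HstarAux

/-- B-type vertices (includes diagonal vertices and the top vertex). -/
def Bf {s : ℕ} (n : Fin s → ℕ) (j : ℕ) : Fin s → ℕ := fun k => min j (n k)

/-- C-type vertices. -/
def Cf {s : ℕ} (n : Fin s → ℕ) (j : ℕ) : Fin s → ℕ := fun k => if j < n k then j else 1

theorem two_of_card_two {a b c : ℕ} (h : ({a, b, c} : Finset ℕ).card = 2) :
    a = b ∨ a = c ∨ b = c := by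
  by_contra hc
  push_neg at hc
  obtain ⟨h1, h2, h3⟩ := hc
  rw [Finset.card_insert_of_notMem (by simp [h1, h2]),
    Finset.card_insert_of_notMem (by simp [h3]), Finset.card_singleton] at h
  omega

theorem card_two_cases {a b c : ℕ}
    (h : (a = b ∧ a ≠ c) ∨ (a = c ∧ a ≠ b) ∨ (b = c ∧ a ≠ b)) :
    ({a, b, c} : Finset ℕ).card = 2 := by
  apply Finset.card_eq_two.2
  rcases h with ⟨h1, h2⟩ | ⟨h1, h2⟩ | ⟨h1, h2⟩
  · subst h1; exact ⟨a, c, h2, by ext x; simp; try tauto⟩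
  · subst h1; exact ⟨a, b, h2, by ext x; simp; try tauto⟩
  · subst h1; exact ⟨a, b, h2, by ext x; simp; try tauto⟩

theorem mem_X_iff {s : ℕ} (hs : 0 < s) (n : Fin s → ℕ) (hanti : StrictAnti n)
    (h2 : 2 ≤ n ⟨s - 1, Nat.sub_lt hs one_pos⟩) (x : Fin s → ℕ) :
    x ∈ XstarGen s n ↔
      ((∃ j, 1 ≤ j ∧ j ≤ n ⟨0, hs⟩ ∧ x = Bf n j) ∨
       (∃ j, n ⟨s - 1, Nat.sub_lt hs one_pos⟩ ≤ j ∧ j < n ⟨0, hs⟩ ∧ x = Cf n j)) := by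
  classical
  have hsl : s - 1 < s := Nat.sub_lt hs one_pos
  have hmono : ∀ a b : Fin s, (a : ℕ) ≤ (b : ℕ) → n b ≤ n a := fun a b h =>
    hanti.antitone (Fin.le_def.mpr h)
  have hLle : ∀ k : Fin s, n ⟨s - 1, hsl⟩ ≤ n k := fun k =>
    hmono k ⟨s - 1, hsl⟩ (by have := k.isLt; simp; omega)
  have hle0 : ∀ k : Fin s, n k ≤ n ⟨0, hs⟩ := fun k => hmono ⟨0, hs⟩ k (by simp)
  have h2' : 2 ≤ n ⟨s - 1, hsl⟩ := h2
  have h2a : ∀ k : Fin s, 2 ≤ n k := fun k => le_trans h2' (hLle k)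
  constructor
  · rintro (⟨last, hlast, i, hi1, hi2, hx⟩ | ⟨t, u, hut, j, hjt, hju, hx | hx⟩ | hx)
    · -- diagonal
      have hlast' : last = ⟨s - 1, hsl⟩ := by apply Fin.ext; simp; omega
      rw [hlast'] at hi2
      left
      refine ⟨i, hi1, by have := hLle ⟨0, hs⟩; omega, funext fun k => ?_⟩
      rw [hx k]
      have : i < n k := by have := hLle k; omega
      simp only [Bf]; omega
    · -- B-type
      have h1j : 1 ≤ j := by have := h2a t; omega
      left
      refine ⟨j, h1j, by have := hle0 u; omega, funext fun k => ?_⟩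
      rcases lt_or_ge (k : ℕ) (t : ℕ) with hk | hk
      · rw [(hx k).1 hk]
        have : j < n k := by have := hmono k u (by omega); omega
        simp only [Bf]; omega
      · rw [(hx k).2 hk]
        have : n k ≤ j := le_trans (hmono t k hk) hjt
        simp only [Bf]; omega
    · -- C-type
      right
      refine ⟨j, le_trans (hLle t) hjt, by have := hle0 u; omega, funext fun k => ?_⟩
      rcases lt_or_ge (k : ℕ) (t : ℕ) with hk | hk
      · rw [(hx k).1 hk]
        have : j < n k := by have := hmono k u (by omega); omega
        simp only [Cf, if_pos this]
      · rw [(hx k).2 hk]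
        have : n k ≤ j := le_trans (hmono t k hk) hjt
        simp only [Cf]; rw [if_neg (by omega)]
    · -- top
      left
      refine ⟨n ⟨0, hs⟩, by have := h2a ⟨0, hs⟩; omega, le_rfl, funext fun k => ?_⟩
      rw [hx k]
      simp only [Bf]
      have := hle0 k; omega
  · rintro (⟨j, hj1, hj2, rfl⟩ | ⟨j, hjL, hj0, rfl⟩)
    · rcases lt_or_ge j (n ⟨s - 1, hsl⟩) with hlt | hge
      · -- diagonal
        left
        refine ⟨⟨s - 1, hsl⟩, by simp; omega, j, hj1, by omega, fun k => ?_⟩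
        have : j < n k := lt_of_lt_of_le hlt (hLle k)
        simp only [Bf]; omega
      · rcases eq_or_lt_of_le hj2 with heq | hlt0
        · -- top
          right; right
          intro k
          subst heq
          simp only [Bf]
          have := hle0 k; omega
        · -- B-type
          have hex : ∃ v, ∃ h : v < s, n ⟨v, h⟩ ≤ j := ⟨s - 1, hsl, hge⟩
          obtain ⟨htvs, htvj⟩ := Nat.find_spec hex
          set tv := Nat.find hex with htvdef
          have htv1 : 0 < tv := by
            rcases Nat.eq_zero_or_pos tv with h0 | h0
            · exfalso
              have he : (⟨tv, htvs⟩ : Fin s) = ⟨0, hs⟩ := Fin.ext (by simp [h0])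
              rw [he] at htvj; omega
            · exact h0
          have htvm : tv - 1 < s := by omega
          have hprev : ¬ ∃ h : tv - 1 < s, n ⟨tv - 1, h⟩ ≤ j :=
            Nat.find_min hex (by omega)
          have hprev' : j < n ⟨tv - 1, htvm⟩ := by
            by_contra h; push_neg at h; exact hprev ⟨htvm, h⟩
          right; left
          refine ⟨⟨tv, htvs⟩, ⟨tv - 1, htvm⟩, by simp; omega, j, htvj,
            by simpa using hprev', Or.inl fun k => ⟨fun hk => ?_, fun hk => ?_⟩⟩
          · have : j < n k := lt_of_lt_of_le hprev'
              (hmono k ⟨tv - 1, htvm⟩ (by simp at hk ⊢; omega))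
            simp only [Bf]; omega
          · have : n k ≤ j := le_trans (hmono ⟨tv, htvs⟩ k (by simpa using hk)) htvj
            simp only [Bf]; omega
    · -- C-type
      have hge : n ⟨s - 1, hsl⟩ ≤ j := hjL
      have hex : ∃ v, ∃ h : v < s, n ⟨v, h⟩ ≤ j := ⟨s - 1, hsl, hge⟩
      obtain ⟨htvs, htvj⟩ := Nat.find_spec hex
      set tv := Nat.find hex with htvdef
      have htv1 : 0 < tv := by
        rcases Nat.eq_zero_or_pos tv with h0 | h0
        · exfalso
          have he : (⟨tv, htvs⟩ : Fin s) = ⟨0, hs⟩ := Fin.ext (by simp [h0])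
          rw [he] at htvj; omega
        · exact h0
      have htvm : tv - 1 < s := by omega
      have hprev : ¬ ∃ h : tv - 1 < s, n ⟨tv - 1, h⟩ ≤ j :=
        Nat.find_min hex (by omega)
      have hprev' : j < n ⟨tv - 1, htvm⟩ := by
        by_contra h; push_neg at h; exact hprev ⟨htvm, h⟩
      right; left
      refine ⟨⟨tv, htvs⟩, ⟨tv - 1, htvm⟩, by simp; omega, j, htvj,
        by simpa using hprev', Or.inr fun k => ⟨fun hk => ?_, fun hk => ?_⟩⟩
      · have : j < n k := lt_of_lt_of_le hprev'
          (hmono k ⟨tv - 1, htvm⟩ (by simp at hk ⊢; omega))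
        simp only [Cf, if_pos this]
      · have : n k ≤ j := le_trans (hmono ⟨tv, htvs⟩ k (by simpa using hk)) htvj
        simp only [Cf]; rw [if_neg (by omega)]

theorem main_unique {s : ℕ} (hs : 0 < s) (n : Fin s → ℕ) (hanti : StrictAnti n)
    (h2 : 2 ≤ n ⟨s - 1, Nat.sub_lt hs one_pos⟩) (k : ℕ) (f : XstarGen s n → Fin k)
    (hf : IsStrictColoring (HstarOn (XstarGen s n)) k f) :
    ∃ i : Fin s, k = n i ∧
      ∀ u v : XstarGen s n, f u = f v ↔ (u : Fin s → ℕ) i = (v : Fin s → ℕ) i := by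
  classical
  have hsl : s - 1 < s := Nat.sub_lt hs one_pos
  have hmono : ∀ a b : Fin s, (a : ℕ) ≤ (b : ℕ) → n b ≤ n a := fun a b h =>
    hanti.antitone (Fin.le_def.mpr h)
  have hLle : ∀ c : Fin s, n ⟨s - 1, hsl⟩ ≤ n c := fun c =>
    hmono c ⟨s - 1, hsl⟩ (by have := c.isLt; simp; omega)
  have hle0 : ∀ c : Fin s, n c ≤ n ⟨0, hs⟩ := fun c => hmono ⟨0, hs⟩ c (by simp)
  have h2' : 2 ≤ n ⟨s - 1, hsl⟩ := h2
  have h2a : ∀ c : Fin s, 2 ≤ n c := fun c => le_trans h2' (hLle c)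
  have hLle0 : n ⟨s - 1, hsl⟩ ≤ n ⟨0, hs⟩ := hLle _
  have memB : ∀ j, 1 ≤ j → j ≤ n ⟨0, hs⟩ → Bf n j ∈ XstarGen s n := fun j a b =>
    (mem_X_iff hs n hanti h2 (Bf n j)).2 (Or.inl ⟨j, a, b, rfl⟩)
  have memC : ∀ j, n ⟨s - 1, hsl⟩ ≤ j → j < n ⟨0, hs⟩ → Cf n j ∈ XstarGen s n := fun j a b =>
    (mem_X_iff hs n hanti h2 (Cf n j)).2 (Or.inr ⟨j, a, b, rfl⟩)
  have memB' : ∀ j, n ⟨s - 1, hsl⟩ ≤ j → j < n ⟨0, hs⟩ → Bf n j ∈ XstarGen s n :=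
    fun j a b => memB j (by omega) (by omega)
  have hm1 : Bf n 1 ∈ XstarGen s n := memB 1 le_rfl (by have := h2a ⟨0, hs⟩; omega)
  -- D-edge consequence
  have hD : ∀ (a b : Fin s → ℕ) (ha : a ∈ XstarGen s n) (hb : b ∈ XstarGen s n),
      (∀ c, a c ≠ b c) → f ⟨a, ha⟩ ≠ f ⟨b, hb⟩ := by
    intro a b ha hb hco
    obtain ⟨p, hp, q, hq, hpq, hfpq⟩ :=
      hf.2.2 {⟨a, ha⟩, ⟨b, hb⟩} ⟨⟨a, ha⟩, ⟨b, hb⟩, rfl, hco⟩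
    simp only [Set.mem_insert_iff, Set.mem_singleton_iff] at hp hq
    rcases hp with rfl | rfl <;> rcases hq with rfl | rfl
    · exact absurd rfl hpq
    · exact hfpq
    · exact fun h => hfpq h.symm
    · exact absurd rfl hpq
  -- C-edge consequence
  have hCe : ∀ (a b c : Fin s → ℕ) (ha : a ∈ XstarGen s n) (hb : b ∈ XstarGen s n)
      (hc : c ∈ XstarGen s n), a ≠ b → a ≠ c → b ≠ c →
      (∀ co : Fin s, ({a co, b co, c co} : Finset ℕ).card = 2) →
      f ⟨a, ha⟩ = f ⟨b, hb⟩ ∨ f ⟨a, ha⟩ = f ⟨c, hc⟩ ∨ f ⟨b, hb⟩ = f ⟨c, hc⟩ := by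
    intro a b c ha hb hc hab hac hbc hcard
    have hne1 : (⟨a, ha⟩ : XstarGen s n) ≠ ⟨b, hb⟩ := fun h => hab (congrArg Subtype.val h)
    have hne2 : (⟨a, ha⟩ : XstarGen s n) ≠ ⟨c, hc⟩ := fun h => hac (congrArg Subtype.val h)
    have hne3 : (⟨b, hb⟩ : XstarGen s n) ≠ ⟨c, hc⟩ := fun h => hbc (congrArg Subtype.val h)
    obtain ⟨p, hp, q, hq, hpq, hfpq⟩ := hf.2.1 {⟨a, ha⟩, ⟨b, hb⟩, ⟨c, hc⟩}
      ⟨⟨a, ha⟩, ⟨b, hb⟩, ⟨c, hc⟩, hne1, hne2, hne3, rfl, hcard⟩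
    simp only [Set.mem_insert_iff, Set.mem_singleton_iff] at hp hq
    rcases hp with rfl | rfl | rfl <;> rcases hq with rfl | rfl | rfl <;>
      first
        | exact absurd rfl hpq
        | exact Or.inl hfpq
        | exact Or.inl hfpq.symm
        | exact Or.inr (Or.inl hfpq)
        | exact Or.inr (Or.inl hfpq.symm)
        | exact Or.inr (Or.inr hfpq)
        | exact Or.inr (Or.inr hfpq.symm)
  -- basic D-edge instances
  have hDBB : ∀ j j' (hmB : Bf n j ∈ XstarGen s n) (hmB' : Bf n j' ∈ XstarGen s n),
      1 ≤ j → j < n ⟨s - 1, hsl⟩ → j < j' → f ⟨Bf n j, hmB⟩ ≠ f ⟨Bf n j', hmB'⟩ := by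
    intro j j' hmB hmB' h1 hb hc
    apply hD _ _ hmB hmB'
    intro c
    have e1 := h2a c; have e2 := hLle c
    simp only [Bf]
    omega
  have hDBC : ∀ j j' (hmB : Bf n j ∈ XstarGen s n) (hmC' : Cf n j' ∈ XstarGen s n),
      2 ≤ j → n ⟨s - 1, hsl⟩ ≤ j' → j ≠ j' → f ⟨Bf n j, hmB⟩ ≠ f ⟨Cf n j', hmC'⟩ := by
    intro j j' hmB hmC' h1 hb hc
    apply hD _ _ hmB hmC'
    intro c
    have e1 := h2a c; have e2 := hLle c
    simp only [Bf, Cf]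
    split_ifs <;> omega
  -- C-edge instances
  have hE1 : ∀ j (hmB : Bf n j ∈ XstarGen s n) (hmC : Cf n j ∈ XstarGen s n),
      n ⟨s - 1, hsl⟩ ≤ j → j < n ⟨0, hs⟩ →
      f ⟨Bf n j, hmB⟩ = f ⟨Cf n j, hmC⟩ ∨ f ⟨Cf n j, hmC⟩ = f ⟨Bf n 1, hm1⟩ := by
    intro j hmB hmC ha hb
    have hres := hCe (Bf n j) (Cf n j) (Bf n 1) hmB hmC hm1
      (by intro h
          have hc := congrFun h ⟨s - 1, hsl⟩
          simp only [Bf, Cf] at hc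
          split_ifs at hc <;> omega)
      (by intro h
          have hc := congrFun h ⟨0, hs⟩
          have e1 := h2a ⟨0, hs⟩
          simp only [Bf] at hc
          omega)
      (by intro h
          have hc := congrFun h ⟨0, hs⟩
          have e1 := h2a ⟨0, hs⟩
          simp only [Bf, Cf] at hc
          split_ifs at hc <;> omega)
      (by intro c
          have e1 := h2a c; have e2 := hLle c
          apply card_two_cases
          simp only [Bf, Cf]
          split_ifs <;> omega)
    rcases hres with h | h | h
    · exact Or.inl h
    · exact absurd h.symm (hDBB 1 j hm1 hmB le_rfl (by omega) (by omega))
    · exact Or.inr h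
  have hE3 : ∀ j j' (hmB : Bf n j ∈ XstarGen s n) (hmC : Cf n j ∈ XstarGen s n)
      (hmB' : Bf n j' ∈ XstarGen s n),
      n ⟨s - 1, hsl⟩ ≤ j → j < n ⟨0, hs⟩ → 1 ≤ j' → j' ≤ n ⟨0, hs⟩ → j ≠ j' →
      (∀ c : Fin s, n c ≤ j → n c ≤ j') →
      f ⟨Bf n j, hmB⟩ = f ⟨Cf n j, hmC⟩ ∨ f ⟨Bf n j, hmB⟩ = f ⟨Bf n j', hmB'⟩ := by
    intro j j' hmB hmC hmB' ha hb hc hd he hgood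
    have hres := hCe (Bf n j) (Cf n j) (Bf n j') hmB hmC hmB'
      (by intro h
          have hx := congrFun h ⟨s - 1, hsl⟩
          simp only [Bf, Cf] at hx
          split_ifs at hx <;> omega)
      (by intro h
          have hx := congrFun h ⟨0, hs⟩
          have e1 := h2a ⟨0, hs⟩
          simp only [Bf] at hx
          omega)
      (by intro h
          have hx := congrFun h ⟨0, hs⟩
          have e1 := h2a ⟨0, hs⟩
          simp only [Bf, Cf] at hx
          split_ifs at hx <;> omega)
      (by intro c
          have e1 := h2a c; have e2 := hLle c; have e3 := hgood c
          apply card_two_cases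
          simp only [Bf, Cf]
          split_ifs <;> omega)
    rcases hres with h | h | h
    · exact Or.inl h
    · exact Or.inr h
    · exfalso
      apply hD (Cf n j) (Bf n j') hmC hmB' _ h
      intro c
      have e1 := h2a c; have e2 := hgood c
      simp only [Bf, Cf]
      split_ifs <;> omega
  have hE4 : ∀ j j' (hmB : Bf n j ∈ XstarGen s n) (hmC : Cf n j ∈ XstarGen s n)
      (hmC' : Cf n j' ∈ XstarGen s n),
      n ⟨s - 1, hsl⟩ ≤ j → j < n ⟨0, hs⟩ → n ⟨s - 1, hsl⟩ ≤ j' → j' < n ⟨0, hs⟩ → j ≠ j' →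
      (∀ c : Fin s, n c ≤ j → n c ≤ j') →
      f ⟨Bf n j, hmB⟩ = f ⟨Cf n j, hmC⟩ ∨ f ⟨Cf n j, hmC⟩ = f ⟨Cf n j', hmC'⟩ := by
    intro j j' hmB hmC hmC' ha hb hc hd he hgood
    have hres := hCe (Bf n j) (Cf n j) (Cf n j') hmB hmC hmC'
      (by intro h
          have hx := congrFun h ⟨s - 1, hsl⟩
          simp only [Bf, Cf] at hx
          split_ifs at hx <;> omega)
      (by intro h
          have hx := congrFun h ⟨0, hs⟩
          have e1 := h2a ⟨0, hs⟩
          simp only [Bf, Cf] at hx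
          split_ifs at hx <;> omega)
      (by intro h
          have hx := congrFun h ⟨0, hs⟩
          have e1 := h2a ⟨0, hs⟩
          simp only [Cf] at hx
          split_ifs at hx <;> omega)
      (by intro c
          have e1 := h2a c; have e2 := hLle c; have e3 := hgood c
          apply card_two_cases
          simp only [Bf, Cf]
          split_ifs <;> omega)
    rcases hres with h | h | h
    · exact Or.inl h
    · exact absurd h (hDBC j j' hmB hmC' (by omega) hc he)
    · exact Or.inr h
  -- the threshold m
  obtain ⟨m, hm1b, hm2b, ⟨i, him⟩, hMiff⟩ :
      ∃ m : ℕ, n ⟨s - 1, hsl⟩ ≤ m ∧ m ≤ n ⟨0, hs⟩ ∧ (∃ i : Fin s, n i = m) ∧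
        ∀ j (h1 : n ⟨s - 1, hsl⟩ ≤ j) (h2x : j < n ⟨0, hs⟩)
          (hmB : Bf n j ∈ XstarGen s n) (hmC : Cf n j ∈ XstarGen s n),
          (f ⟨Bf n j, hmB⟩ = f ⟨Cf n j, hmC⟩ ↔ j < m) := by
    by_cases hex : ∃ jj, ∃ h : n ⟨s - 1, hsl⟩ ≤ jj ∧ jj < n ⟨0, hs⟩,
        f ⟨Bf n jj, memB' jj h.1 h.2⟩ ≠ f ⟨Cf n jj, memC jj h.1 h.2⟩
    · obtain ⟨hbounds, hsplitm⟩ := Nat.find_spec hex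
      set m := Nat.find hex with hmdef
      have hsplitm' : ∀ jj (hmB : Bf n jj ∈ XstarGen s n) (hmC : Cf n jj ∈ XstarGen s n),
          jj = m → f ⟨Bf n jj, hmB⟩ ≠ f ⟨Cf n jj, hmC⟩ := by
        intro jj hmB hmC hje
        subst hje
        exact hsplitm
      have hMer : ∀ j (h1 : n ⟨s - 1, hsl⟩ ≤ j) (h2x : j < n ⟨0, hs⟩)
          (hmB : Bf n j ∈ XstarGen s n) (hmC : Cf n j ∈ XstarGen s n), j < m →
          f ⟨Bf n j, hmB⟩ = f ⟨Cf n j, hmC⟩ := by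
        intro j h1 h2x hmB hmC hjm
        have hmin := Nat.find_min hex hjm
        by_contra hne
        exact hmin ⟨⟨h1, h2x⟩, hne⟩
      have hprop : ∀ j (h1 : n ⟨s - 1, hsl⟩ ≤ j) (h2x : j < n ⟨0, hs⟩)
          (hmB : Bf n j ∈ XstarGen s n) (hmC : Cf n j ∈ XstarGen s n),
          (∀ c : Fin s, n c ≤ m → n c ≤ j) → m ≠ j →
          f ⟨Bf n j, hmB⟩ ≠ f ⟨Cf n j, hmC⟩ := by
        intro j h1 h2x hmB hmC hgood hne hMj
        have e3 := hE3 m j (memB' m hbounds.1 hbounds.2) (memC m hbounds.1 hbounds.2)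
          hmB hbounds.1 hbounds.2 (by omega) (by omega) hne hgood
        have e4 := hE4 m j (memB' m hbounds.1 hbounds.2) (memC m hbounds.1 hbounds.2)
          hmC hbounds.1 hbounds.2 h1 h2x hne hgood
        rcases e3 with h | h
        · exact hsplitm' m _ _ rfl h
        rcases e4 with h' | h'
        · exact hsplitm' m _ _ rfl h'
        exact hsplitm' m _ _ rfl (h.trans (hMj.trans h'.symm))
      refine ⟨m, hbounds.1, le_of_lt hbounds.2, ?_, ?_⟩
      · rcases eq_or_lt_of_le hbounds.1 with he | hlt
        · exact ⟨⟨s - 1, hsl⟩, he⟩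
        · by_contra hno
          push_neg at hno
          have hg : ∀ c : Fin s, n c ≤ m → n c ≤ m - 1 := fun c hc => by
            have := hno c; omega
          have h1' : n ⟨s - 1, hsl⟩ ≤ m - 1 := by omega
          have h2x' : m - 1 < n ⟨0, hs⟩ := by omega
          exact hprop (m - 1) h1' h2x' (memB' _ h1' h2x') (memC _ h1' h2x') hg (by omega)
            (hMer (m - 1) h1' h2x' _ _ (by omega))
      · intro j h1 h2x hmB hmC
        constructor
        · intro hM
          by_contra hge
          push_neg at hge
          rcases eq_or_lt_of_le hge with he | hlt
          · exact hsplitm' j hmB hmC he.symm hM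
          · exact hprop j h1 h2x hmB hmC (fun c hc => by omega) (by omega) hM
        · exact hMer j h1 h2x hmB hmC
    · refine ⟨n ⟨0, hs⟩, hLle0, le_rfl, ⟨⟨0, hs⟩, rfl⟩, ?_⟩
      intro j h1 h2x hmB hmC
      have hnot : ¬ (f ⟨Bf n j, memB' j h1 h2x⟩ ≠ f ⟨Cf n j, memC j h1 h2x⟩) :=
        fun hne => hex ⟨j, ⟨h1, h2x⟩, hne⟩
      exact ⟨fun _ => h2x, fun _ => not_not.1 hnot⟩
  -- split vertices are glued to Bf 1
  have hS1 : ∀ j (h1 : n ⟨s - 1, hsl⟩ ≤ j) (h2x : j < n ⟨0, hs⟩)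
      (hmC : Cf n j ∈ XstarGen s n), m ≤ j →
      f ⟨Cf n j, hmC⟩ = f ⟨Bf n 1, hm1⟩ := by
    intro j h1 h2x hmC hmj
    rcases hE1 j (memB' j h1 h2x) hmC h1 h2x with h | h
    · exact absurd ((hMiff j h1 h2x _ _).1 h) (by omega)
    · exact h
  -- partition facts
  have hBBlt : ∀ j j' (hmB : Bf n j ∈ XstarGen s n) (hmB' : Bf n j' ∈ XstarGen s n),
      1 ≤ j → j < j' → j' ≤ n ⟨0, hs⟩ →
      (f ⟨Bf n j, hmB⟩ = f ⟨Bf n j', hmB'⟩ ↔ m ≤ j) := by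
    intro j j' hmB hmB' h1 hjj h2x
    constructor
    · intro hff
      by_contra hno
      push_neg at hno
      rcases lt_or_ge j (n ⟨s - 1, hsl⟩) with hlt | hge
      · exact hDBB j j' hmB hmB' h1 hlt hjj hff
      · have hjn0 : j < n ⟨0, hs⟩ := by omega
        have hM := (hMiff j hge hjn0 (memB' j hge hjn0) (memC j hge hjn0)).2 hno
        have hD2 := hDBC j' j hmB' (memC j hge hjn0) (by omega) hge (by omega)
        exact hD2 (hff.symm.trans hM)
    · intro hmj
      have hgej : n ⟨s - 1, hsl⟩ ≤ j := le_trans hm1b hmj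
      have hjn0 : j < n ⟨0, hs⟩ := by omega
      have hsplit : ¬ f ⟨Bf n j, memB' _ hgej hjn0⟩ = f ⟨Cf n j, memC _ hgej hjn0⟩ := by
        rw [hMiff j hgej hjn0 _ _]; omega
      rcases hE3 j j' (memB' _ hgej hjn0) (memC _ hgej hjn0) hmB' hgej hjn0 (by omega) h2x
        (by omega) (fun c hc => by omega) with h | h
      · exact absurd h hsplit
      · exact h
  have hBB : ∀ j j' (hmB : Bf n j ∈ XstarGen s n) (hmB' : Bf n j' ∈ XstarGen s n),
      1 ≤ j → j ≤ n ⟨0, hs⟩ → 1 ≤ j' → j' ≤ n ⟨0, hs⟩ →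
      (f ⟨Bf n j, hmB⟩ = f ⟨Bf n j', hmB'⟩ ↔ min j m = min j' m) := by
    intro j j' hmB hmB' a b c d
    rcases lt_trichotomy j j' with h | h | h
    · rw [hBBlt j j' hmB hmB' a h d]; omega
    · subst h; simp
    · rw [eq_comm, hBBlt j' j hmB' hmB c h b]; omega
  have hBC : ∀ j j' (hmB : Bf n j ∈ XstarGen s n) (hmC' : Cf n j' ∈ XstarGen s n),
      1 ≤ j → j ≤ n ⟨0, hs⟩ → n ⟨s - 1, hsl⟩ ≤ j' → j' < n ⟨0, hs⟩ →
      (f ⟨Bf n j, hmB⟩ = f ⟨Cf n j', hmC'⟩ ↔ min j m = (if j' < m then j' else 1)) := by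
    intro j j' hmB hmC' a b c d
    rcases lt_or_ge j' m with hjm | hjm
    · rw [if_pos hjm]
      have hmer : f ⟨Bf n j', memB' j' c d⟩ = f ⟨Cf n j', hmC'⟩ :=
        (hMiff j' c d _ _).2 hjm
      constructor
      · intro hff
        have hjeq : j = j' := by
          by_contra hne
          rcases Nat.lt_or_ge j 2 with hj2 | hj2
          · have hj1 : j = 1 := by omega
            subst hj1
            exact hDBB 1 j' hmB (memB' j' c d) le_rfl (by omega) (by omega)
              (hff.trans hmer.symm)
          · exact hDBC j j' hmB hmC' hj2 c hne hff
        subst hjeq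
        omega
      · intro harith
        have hje : j = j' := by omega
        subst hje
        exact (hMiff j c d hmB hmC').2 hjm
    · rw [if_neg (by omega)]
      have hs1 := hS1 j' c d hmC' hjm
      constructor
      · intro hff
        have hj1 : j = 1 := by
          by_contra hne
          exact hDBB 1 j hm1 hmB le_rfl (by omega) (by omega)
            (hff.trans hs1).symm
        subst hj1
        omega
      · intro harith
        have hj1 : j = 1 := by omega
        subst hj1
        exact hs1.symm
  have hCClt : ∀ j j' (hmC : Cf n j ∈ XstarGen s n) (hmC' : Cf n j' ∈ XstarGen s n),
      n ⟨s - 1, hsl⟩ ≤ j → j < n ⟨0, hs⟩ → n ⟨s - 1, hsl⟩ ≤ j' → j' < n ⟨0, hs⟩ → j < j' →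
      (f ⟨Cf n j, hmC⟩ = f ⟨Cf n j', hmC'⟩ ↔ m ≤ j) := by
    intro j j' hmC hmC' a b c d hjj
    constructor
    · intro hff
      by_contra hno
      push_neg at hno
      have hmerj := (hMiff j a b (memB' j a b) hmC).2 hno
      rcases lt_or_ge j' m with h' | h'
      · have hmerj' := (hMiff j' c d (memB' j' c d) hmC').2 h'
        have hdd := hDBC j' j (memB' j' c d) hmC (by omega) a (by omega)
        exact hdd (hmerj'.trans hff.symm)
      · have hs1' := hS1 j' c d hmC' h'
        have hdd := hDBB 1 j hm1 (memB' j a b) le_rfl (by omega) (by omega)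
        exact hdd (hmerj.trans (hff.trans hs1')).symm
    · intro hmj
      exact (hS1 j a b hmC hmj).trans (hS1 j' c d hmC' (by omega)).symm
  have hCC : ∀ j j' (hmC : Cf n j ∈ XstarGen s n) (hmC' : Cf n j' ∈ XstarGen s n),
      n ⟨s - 1, hsl⟩ ≤ j → j < n ⟨0, hs⟩ → n ⟨s - 1, hsl⟩ ≤ j' → j' < n ⟨0, hs⟩ →
      (f ⟨Cf n j, hmC⟩ = f ⟨Cf n j', hmC'⟩ ↔
        (if j < m then j else 1) = (if j' < m then j' else 1)) := by
    intro j j' hmC hmC' a b c d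
    rcases lt_trichotomy j j' with h | h | h
    · rw [hCClt j j' hmC hmC' a b c d h]
      split_ifs <;> omega
    · subst h; simp
    · rw [eq_comm, hCClt j' j hmC' hmC c d a b h]
      split_ifs <;> omega
  -- the partition statement
  have hpart : ∀ u v : XstarGen s n,
      f u = f v ↔ (u : Fin s → ℕ) i = (v : Fin s → ℕ) i := by
    intro u v
    rcases (mem_X_iff hs n hanti h2 _).1 u.2 with ⟨j, a, b, hu⟩ | ⟨j, a, b, hu⟩ <;>
      rcases (mem_X_iff hs n hanti h2 _).1 v.2 with ⟨j', a', b', hv⟩ | ⟨j', a', b', hv⟩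
    · have hu' : u = ⟨Bf n j, memB j a b⟩ := Subtype.ext hu
      have hv' : v = ⟨Bf n j', memB j' a' b'⟩ := Subtype.ext hv
      have hui : (u : Fin s → ℕ) i = min j (n i) := by rw [hu]; rfl
      have hvi : (v : Fin s → ℕ) i = min j' (n i) := by rw [hv]; rfl
      rw [congrArg f hu', congrArg f hv', hui, hvi, him]
      exact hBB j j' _ _ a b a' b'
    · have hu' : u = ⟨Bf n j, memB j a b⟩ := Subtype.ext hu
      have hv' : v = ⟨Cf n j', memC j' a' b'⟩ := Subtype.ext hv
      have hui : (u : Fin s → ℕ) i = min j (n i) := by rw [hu]; rfl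
      have hvi : (v : Fin s → ℕ) i = (if j' < n i then j' else 1) := by rw [hv]; rfl
      rw [congrArg f hu', congrArg f hv', hui, hvi, him]
      exact hBC j j' _ _ a b a' b'
    · have hu' : u = ⟨Cf n j, memC j a b⟩ := Subtype.ext hu
      have hv' : v = ⟨Bf n j', memB j' a' b'⟩ := Subtype.ext hv
      have hui : (u : Fin s → ℕ) i = (if j < n i then j else 1) := by rw [hu]; rfl
      have hvi : (v : Fin s → ℕ) i = min j' (n i) := by rw [hv]; rfl
      rw [congrArg f hu', congrArg f hv', hui, hvi, him]
      exact eq_comm.trans ((hBC j' j _ _ a' b' a b).trans eq_comm)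
    · have hu' : u = ⟨Cf n j, memC j a b⟩ := Subtype.ext hu
      have hv' : v = ⟨Cf n j', memC j' a' b'⟩ := Subtype.ext hv
      have hui : (u : Fin s → ℕ) i = (if j < n i then j else 1) := by rw [hu]; rfl
      have hvi : (v : Fin s → ℕ) i = (if j' < n i then j' else 1) := by rw [hv]; rfl
      rw [congrArg f hu', congrArg f hv', hui, hvi, him]
      exact hCC j j' _ _ a b a' b'
  -- value bounds
  have hvb : ∀ u : XstarGen s n, 1 ≤ (u : Fin s → ℕ) i ∧ (u : Fin s → ℕ) i ≤ m := by
    intro u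
    rcases (mem_X_iff hs n hanti h2 _).1 u.2 with ⟨j, a, b, hu⟩ | ⟨j, a, b, hu⟩
    · rw [hu]
      simp only [Bf]
      rw [him]
      omega
    · rw [hu]
      simp only [Cf]
      rw [him]
      split_ifs <;> omega
  -- cardinality: k = m
  obtain ⟨g, hg⟩ := Function.Surjective.hasRightInverse hf.1
  have hkm : k = m := by
    have hcard := Finset.card_bij
      (fun (α : Fin k) (_ : α ∈ Finset.univ) => ((g α : XstarGen s n) : Fin s → ℕ) i)
      (fun a _ => by rw [Finset.mem_Icc]; exact hvb (g a))
      (fun a _ b _ hab => by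
        have hfg : f (g a) = f (g b) := (hpart _ _).2 hab
        rw [hg a, hg b] at hfg
        exact hfg)
      (fun b hb => by
        rw [Finset.mem_Icc] at hb
        refine ⟨f ⟨Bf n b, memB b hb.1 (le_trans hb.2 hm2b)⟩, Finset.mem_univ _, ?_⟩
        have h1 : f (g (f ⟨Bf n b, memB b hb.1 (le_trans hb.2 hm2b)⟩)) =
            f ⟨Bf n b, memB b hb.1 (le_trans hb.2 hm2b)⟩ := by rw [hg]
        have h2x : ((g (f ⟨Bf n b, memB b hb.1 (le_trans hb.2 hm2b)⟩) : XstarGen s n) :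
            Fin s → ℕ) i = min b (n i) := (hpart _ _).1 h1
        exact h2x.trans (by rw [him]; omega))
    rw [Finset.card_univ, Fintype.card_fin, Nat.card_Icc] at hcard
    omega
  exact ⟨i, by omega, hpart⟩

theorem ncard_X {s : ℕ} (hs : 0 < s) (n : Fin s → ℕ) (hanti : StrictAnti n)
    (h2 : 2 ≤ n ⟨s - 1, Nat.sub_lt hs one_pos⟩) :
    (XstarGen s n).ncard = 2 * n ⟨0, hs⟩ - n ⟨s - 1, Nat.sub_lt hs one_pos⟩ := by
  have hsl : s - 1 < s := Nat.sub_lt hs one_pos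
  have hmono : ∀ a b : Fin s, (a : ℕ) ≤ (b : ℕ) → n b ≤ n a := fun a b h =>
    hanti.antitone (Fin.le_def.mpr h)
  have hLle : ∀ c : Fin s, n ⟨s - 1, hsl⟩ ≤ n c := fun c =>
    hmono c ⟨s - 1, hsl⟩ (by have := c.isLt; simp; omega)
  have hle0 : ∀ c : Fin s, n c ≤ n ⟨0, hs⟩ := fun c => hmono ⟨0, hs⟩ c (by simp)
  have h2' : 2 ≤ n ⟨s - 1, hsl⟩ := h2
  have h2a : ∀ c : Fin s, 2 ≤ n c := fun c => le_trans h2' (hLle c)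
  have hLle0 : n ⟨s - 1, hsl⟩ ≤ n ⟨0, hs⟩ := hLle _
  have h20 : 2 ≤ n ⟨0, hs⟩ := h2a _
  have hXeq : XstarGen s n =
      (Bf n '' Set.Icc 1 (n ⟨0, hs⟩)) ∪ (Cf n '' Set.Icc (n ⟨s - 1, hsl⟩) (n ⟨0, hs⟩ - 1)) := by
    ext x
    rw [mem_X_iff hs n hanti h2 x]
    simp only [Set.mem_union, Set.mem_image, Set.mem_Icc]
    constructor
    · rintro (⟨j, a, b, rfl⟩ | ⟨j, a, b, rfl⟩)
      · exact Or.inl ⟨j, ⟨a, b⟩, rfl⟩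
      · exact Or.inr ⟨j, ⟨a, by omega⟩, rfl⟩
    · rintro (⟨j, ⟨a, b⟩, rfl⟩ | ⟨j, ⟨a, b⟩, rfl⟩)
      · exact Or.inl ⟨j, a, b, rfl⟩
      · exact Or.inr ⟨j, a, by omega, rfl⟩
  have hinjB : Set.InjOn (Bf n) (Set.Icc 1 (n ⟨0, hs⟩)) := by
    intro a ha b hb h
    simp only [Set.mem_Icc] at ha hb
    have hc := congrFun h ⟨0, hs⟩
    simp only [Bf] at hc
    omega
  have hinjC : Set.InjOn (Cf n) (Set.Icc (n ⟨s - 1, hsl⟩) (n ⟨0, hs⟩ - 1)) := by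
    intro a ha b hb h
    simp only [Set.mem_Icc] at ha hb
    have hc := congrFun h ⟨0, hs⟩
    simp only [Cf] at hc
    split_ifs at hc <;> omega
  have hdisj : Disjoint (Bf n '' Set.Icc 1 (n ⟨0, hs⟩))
      (Cf n '' Set.Icc (n ⟨s - 1, hsl⟩) (n ⟨0, hs⟩ - 1)) := by
    rw [Set.disjoint_left]
    rintro x ⟨j, hj, rfl⟩ ⟨j', hj', hEq⟩
    simp only [Set.mem_Icc] at hj hj'
    have c0 := congrFun hEq ⟨0, hs⟩
    have cL := congrFun hEq ⟨s - 1, hsl⟩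
    simp only [Bf, Cf] at c0 cL
    split_ifs at c0 cL <;> omega
  rw [hXeq, Set.ncard_union_eq hdisj ((Set.finite_Icc _ _).image _)
      ((Set.finite_Icc _ _).image _),
    Set.ncard_image_of_injOn hinjB, Set.ncard_image_of_injOn hinjC]
  have e1 : (Set.Icc 1 (n ⟨0, hs⟩)).ncard = n ⟨0, hs⟩ + 1 - 1 := by
    rw [← Finset.coe_Icc, Set.ncard_coe_finset, Nat.card_Icc]
  have e2 : (Set.Icc (n ⟨s - 1, hsl⟩) (n ⟨0, hs⟩ - 1)).ncard =
      n ⟨0, hs⟩ - 1 + 1 - n ⟨s - 1, hsl⟩ := by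
    rw [← Finset.coe_Icc, Set.ncard_coe_finset, Nat.card_Icc]
  rw [e1, e2]
  omega

theorem proj_feasible {s : ℕ} (hs : 0 < s) (n : Fin s → ℕ) (hanti : StrictAnti n)
    (h2 : 2 ≤ n ⟨s - 1, Nat.sub_lt hs one_pos⟩) (i : Fin s) :
    ∃ f : XstarGen s n → Fin (n i), IsStrictColoring (HstarOn (XstarGen s n)) (n i) f := by
  have hsl : s - 1 < s := Nat.sub_lt hs one_pos
  have hmono : ∀ a b : Fin s, (a : ℕ) ≤ (b : ℕ) → n b ≤ n a := fun a b h =>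
    hanti.antitone (Fin.le_def.mpr h)
  have hLle : ∀ c : Fin s, n ⟨s - 1, hsl⟩ ≤ n c := fun c =>
    hmono c ⟨s - 1, hsl⟩ (by have := c.isLt; simp; omega)
  have hle0 : ∀ c : Fin s, n c ≤ n ⟨0, hs⟩ := fun c => hmono ⟨0, hs⟩ c (by simp)
  have h2' : 2 ≤ n ⟨s - 1, hsl⟩ := h2
  have h2a : ∀ c : Fin s, 2 ≤ n c := fun c => le_trans h2' (hLle c)
  have hub : ∀ u : XstarGen s n, 1 ≤ (u : Fin s → ℕ) i ∧ (u : Fin s → ℕ) i ≤ n i := by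
    intro u
    rcases (mem_X_iff hs n hanti h2 _).1 u.2 with ⟨j, a, b, hu⟩ | ⟨j, a, b, hu⟩
    · rw [hu]
      simp only [Bf]
      have := h2a i
      omega
    · rw [hu]
      simp only [Cf]
      have := h2a i; have := hLle i
      split_ifs <;> omega
  refine ⟨fun u => ⟨(u : Fin s → ℕ) i - 1, by have := (hub u).1; have := (hub u).2; omega⟩,
    ?_, ?_, ?_⟩
  · intro c
    have hmem : Bf n (c.1 + 1) ∈ XstarGen s n :=
      (mem_X_iff hs n hanti h2 _).2 (Or.inl ⟨c.1 + 1, by omega,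
        by have := c.isLt; have := hle0 i; omega, rfl⟩)
    refine ⟨⟨Bf n (c.1 + 1), hmem⟩, ?_⟩
    apply Fin.ext
    show min (c.1 + 1) (n i) - 1 = c.1
    have := c.isLt
    omega
  · rintro e ⟨u, v, w, h1, h2e, h3, rfl, hcard⟩
    rcases two_of_card_two (hcard i) with h | h | h
    · exact ⟨u, by simp, v, by simp, h1,
        Fin.ext (by show (u : Fin s → ℕ) i - 1 = (v : Fin s → ℕ) i - 1; rw [h])⟩
    · exact ⟨u, by simp, w, by simp, h2e,
        Fin.ext (by show (u : Fin s → ℕ) i - 1 = (w : Fin s → ℕ) i - 1; rw [h])⟩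
    · exact ⟨v, by simp, w, by simp, h3,
        Fin.ext (by show (v : Fin s → ℕ) i - 1 = (w : Fin s → ℕ) i - 1; rw [h])⟩
  · rintro e ⟨u, v, rfl, hdiff⟩
    refine ⟨u, by simp, v, by simp, fun h => hdiff i (by rw [h]), fun h => ?_⟩
    have hv : (u : Fin s → ℕ) i - 1 = (v : Fin s → ℕ) i - 1 := congrArg Fin.val h
    have := hub u; have := hub v
    exact hdiff i (by omega)

end HstarAux

/-- for `2 ≤ n_s < ⋯ < n₁`, the hypergraph `H*_{n₁,…,n_s}` of
Construction I has `2n₁ - n_s` vertices, is a one-realization of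
`S = {n₁,…,n_s}`, and its strict colorings are exactly the `s`
coordinate-projection colorings, the `i`-th using exactly `n_i` colors. -/
theorem HstarGen_one_realization (s : ℕ) (hs : 0 < s) (n : Fin s → ℕ)
    (hanti : StrictAnti n) (h2 : 2 ≤ n ⟨s - 1, by omega⟩) :
    (XstarGen s n).ncard = 2 * n ⟨0, hs⟩ - n ⟨s - 1, by omega⟩ ∧
    IsOneRealization (HstarOn (XstarGen s n)) (Set.range n) ∧
    ∀ (k : ℕ) (f : XstarGen s n → Fin k),
      IsStrictColoring (HstarOn (XstarGen s n)) k f →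
      ∃ i : Fin s, k = n i ∧
        ∀ u v : XstarGen s n, f u = f v ↔ (u : Fin s → ℕ) i = (v : Fin s → ℕ) i := by
  refine ⟨HstarAux.ncard_X hs n hanti h2, ⟨?_, ?_⟩, ?_⟩
  · ext kk
    simp only [FeasibleSet, Set.mem_setOf_eq, Set.mem_range]
    constructor
    · rintro ⟨f, hf⟩
      obtain ⟨i, hk, -⟩ := HstarAux.main_unique hs n hanti h2 kk f hf
      exact ⟨i, hk.symm⟩
    · rintro ⟨i, rfl⟩
      exact HstarAux.proj_feasible hs n hanti h2 i
  · intro kk f g hfs hgs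
    obtain ⟨i, hki, hfi⟩ := HstarAux.main_unique hs n hanti h2 kk f hfs
    obtain ⟨i', hki', hgi⟩ := HstarAux.main_unique hs n hanti h2 kk g hgs
    have hii : i = i' := hanti.injective (by omega : n i = n i')
    subst hii
    intro u v
    rw [hfi u v, hgi u v]
  · intro kk f hfs
    exact HstarAux.main_unique hs n hanti h2 kk f hfs
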